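/- Let A = J_m ⊕ J_n with m > n ≥ 1 and let B ∈ NilC(A) have canonical rank r ≥ 1 with parameters (a_i), (b_i), (c_i), (d_i) satisfying the canonical-rank conditions and c_{n−r} ≠ 0. Define X as the matrix commuting with A with Turnbull–Aitken row-1 parameters x₀ = 1, x_i = 0 for i ≥ 1, top-right parameters (y₀,…,y_{n−1}) = (a_{m−r}, …, a_{m−1}, 0, …, 0), bottom-left parameters all zero, and bottom-right parameters (w₀,…,w_{n−1}) = (c_{n−r}, …, c_{n−1}, 0, …, 0). Then X is invertible and X⁻¹BX has Turnbull–Aitken parameters a'_i = a_i for 1 ≤ i ≤ m−r−1, a'_i = 0 for m−r ≤ i ≤ m−1, c'_{n−r} = 1, and c'_i = 0 for n−r < i ≤ n−1. -/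

import Mathlib

/-- The k×k nilpotent Jordan block with eigenvalue 0. -/
def jordanBlock (F : Type*) [Field F] (k : ℕ) : Matrix (Fin k) (Fin k) F :=
  fun i j => if (i : ℕ) + 1 = (j : ℕ) then 1 else 0

/-- The direct sum J_m ⊕ J_n, indexed by `Fin m ⊕ Fin n`. -/
def jordanSum (F : Type*) [Field F] (m n : ℕ) :
    Matrix (Fin m ⊕ Fin n) (Fin m ⊕ Fin n) F :=
  Matrix.fromBlocks (jordanBlock F m) 0 0 (jordanBlock F n)

/-- The Turnbull–Aitken block matrix determined by the row-1 parameters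
`a` (top-left m×m upper-triangular Toeplitz block), `b` (top-right m×n TA block),
and the row-(m+1) parameters `c` (bottom-left n×m TA block, whose entries depend
on the arm length j−i−(m−n)) and `d` (bottom-right n×n upper-triangular
Toeplitz block).  This is the general form of a matrix commuting with
J_m ⊕ J_n when m ≥ n. -/
def TAmat {F : Type*} [Field F] (m n : ℕ) (a b c d : ℕ → F) :
    Matrix (Fin m ⊕ Fin n) (Fin m ⊕ Fin n) F :=
  fun p q => match p, q with
  | .inl i, .inl j => if (i : ℕ) ≤ (j : ℕ) then a ((j : ℕ) - (i : ℕ)) else 0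
  | .inl i, .inr j => if (i : ℕ) ≤ (j : ℕ) then b ((j : ℕ) - (i : ℕ)) else 0
  | .inr i, .inl j => if (i : ℕ) + (m - n) ≤ (j : ℕ) then
      c ((j : ℕ) - (i : ℕ) - (m - n)) else 0
  | .inr i, .inr j => if (i : ℕ) ≤ (j : ℕ) then d ((j : ℕ) - (i : ℕ)) else 0


section TAAux
open Finset PowerSeries
variable {F : Type*} [Field F]

/-- Convolution of coefficient sequences. -/
def TAconv (f g : ℕ → F) : ℕ → F := fun k => ∑ t ∈ Finset.range (k + 1), f t * g (k - t)

lemma mk_TAconv (f g : ℕ → F) :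
    PowerSeries.mk (TAconv f g) = PowerSeries.mk f * PowerSeries.mk g := by
  ext k
  rw [PowerSeries.coeff_mk, PowerSeries.coeff_mul,
    Finset.Nat.sum_antidiagonal_eq_sum_range_succ_mk]
  simp [TAconv]

lemma TAconv_coeff (f g : ℕ → F) (k : ℕ) :
    TAconv f g k = PowerSeries.coeff k (PowerSeries.mk f * PowerSeries.mk g) := by
  rw [← mk_TAconv, PowerSeries.coeff_mk]

lemma mk_delta : PowerSeries.mk (fun k => if k = 0 then (1:F) else 0) = 1 := by
  ext k; rw [PowerSeries.coeff_mk, PowerSeries.coeff_one]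

lemma TAconv_delta_left (f : ℕ → F) (k : ℕ) :
    TAconv (fun k => if k = 0 then (1:F) else 0) f k = f k := by
  rw [TAconv_coeff, mk_delta, one_mul, PowerSeries.coeff_mk]

lemma TAconv_delta_right (f : ℕ → F) (k : ℕ) :
    TAconv f (fun k => if k = 0 then (1:F) else 0) k = f k := by
  rw [TAconv_coeff, mk_delta, mul_one, PowerSeries.coeff_mk]

lemma TAconv_zero_left (f : ℕ → F) (k : ℕ) : TAconv (fun _ => (0:F)) f k = 0 := by
  simp [TAconv]

lemma TAconv_zero_right (f : ℕ → F) (k : ℕ) : TAconv f (fun _ => (0:F)) k = 0 := by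
  simp [TAconv]

lemma TAconv_comm (f g : ℕ → F) (k : ℕ) : TAconv f g k = TAconv g f k := by
  rw [TAconv_coeff, TAconv_coeff, mul_comm]

lemma TAconv_assoc (f g h : ℕ → F) (k : ℕ) :
    TAconv (TAconv f g) h k = TAconv f (TAconv g h) k := by
  rw [TAconv_coeff, TAconv_coeff, mk_TAconv, mk_TAconv, mul_assoc]

lemma TAconv_neg_left (f g : ℕ → F) (k : ℕ) :
    TAconv (fun t => -f t) g k = -TAconv f g k := by
  simp [TAconv, neg_mul, Finset.sum_neg_distrib]

lemma TAconv_negconv (f g h : ℕ → F) (k : ℕ) :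
    TAconv (fun t => -(TAconv f g t)) h k = -(TAconv f (TAconv g h) k) := by
  rw [TAconv_neg_left, TAconv_assoc]

/-- Key summation lemma, unshifted version. -/
lemma key0 (N i j : ℕ) (hj : j < N) (f g : ℕ → F) :
    ∑ k ∈ Finset.range N,
      (if i ≤ k then f (k - i) else 0) * (if k ≤ j then g (j - k) else 0)
    = if i ≤ j then TAconv f g (j - i) else 0 := by
  rcases le_or_gt i j with h | h
  · rw [if_pos h]
    have h1 : ∑ k ∈ Finset.range N,
        (if i ≤ k then f (k - i) else 0) * (if k ≤ j then g (j - k) else 0)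
        = ∑ k ∈ Finset.Ico i (j+1),
        (if i ≤ k then f (k - i) else 0) * (if k ≤ j then g (j - k) else 0) := by
      refine (Finset.sum_subset ?_ ?_).symm
      · intro k hk; simp only [Finset.mem_Ico] at hk; simp only [Finset.mem_range]; omega
      · intro k hk hk'
        simp only [Finset.mem_Ico, not_and, not_lt] at hk'
        split_ifs with h1 h2
        · omega
        · ring
        · ring
        · ring
    rw [h1]
    have h2 : ∀ k ∈ Finset.Ico i (j+1),
        (if i ≤ k then f (k - i) else 0) * (if k ≤ j then g (j - k) else 0)
        = f (k - i) * g (j - k) := by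
      intro k hk; simp only [Finset.mem_Ico] at hk
      rw [if_pos hk.1, if_pos (by omega)]
    rw [Finset.sum_congr rfl h2, Finset.sum_Ico_eq_sum_range]
    have : j + 1 - i = (j - i) + 1 := by omega
    rw [this]
    refine Finset.sum_congr rfl fun t ht => ?_
    simp only [Finset.mem_range] at ht
    congr 1
    · congr 1; omega
    · congr 1; omega
  · rw [if_neg (by omega)]
    refine Finset.sum_eq_zero fun k _ => ?_
    split_ifs with h1 h2
    · omega
    · ring
    · ring
    · ring

/-- Key summation lemma with shift `s` in the right factor. -/
lemma keyS (N s i j : ℕ) (hj : j < N + s) (f g : ℕ → F) :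
    ∑ k ∈ Finset.range N,
      (if i ≤ k then f (k - i) else 0) * (if k + s ≤ j then g (j - k - s) else 0)
    = if i + s ≤ j then TAconv f g (j - i - s) else 0 := by
  rcases lt_or_ge j s with h | h
  · rw [if_neg (by omega)]
    refine Finset.sum_eq_zero fun k _ => ?_
    rw [if_neg (show ¬(k + s ≤ j) by omega)]; ring
  · have step : ∑ k ∈ Finset.range N,
        (if i ≤ k then f (k - i) else 0) * (if k + s ≤ j then g (j - k - s) else 0)
        = ∑ k ∈ Finset.range N,
        (if i ≤ k then f (k - i) else 0) * (if k ≤ j - s then g ((j - s) - k) else 0) := by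
      refine Finset.sum_congr rfl fun k _ => ?_
      congr 1
      by_cases hk : k + s ≤ j
      · rw [if_pos hk, if_pos (by omega)]; congr 1; omega
      · rw [if_neg hk, if_neg (by omega)]
    rw [step, key0 N i (j - s) (by omega) f g]
    by_cases hij : i + s ≤ j
    · rw [if_pos (by omega), if_pos hij]; congr 1; omega
    · rw [if_neg (by omega), if_neg hij]

lemma TAmat_congr (m n : ℕ) (a b c d a' b' c' d' : ℕ → F)
    (ha : ∀ k, a k = a' k) (hb : ∀ k, b k = b' k)
    (hc : ∀ k, c k = c' k) (hd : ∀ k, d k = d' k) :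
    TAmat m n a b c d = TAmat m n a' b' c' d' := by
  rw [funext ha, funext hb, funext hc, funext hd]

lemma TAmat_one (m n : ℕ) :
    TAmat (F := F) m n (fun k => if k = 0 then 1 else 0) (fun _ => 0) (fun _ => 0)
      (fun k => if k = 0 then 1 else 0) = 1 := by
  ext p q
  rw [Matrix.one_apply]
  cases p with
  | inl i => cases q with
    | inl j =>
      show (if (i:ℕ) ≤ (j:ℕ) then (if (j:ℕ) - (i:ℕ) = 0 then (1:F) else 0) else 0)
         = if Sum.inl i = Sum.inl j then 1 else 0
      by_cases h : i = j
      · subst h; simp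
      · rw [if_neg (show ¬(Sum.inl i = (Sum.inl j : Fin m ⊕ Fin n)) by simpa using h)]
        have h3 : (i:ℕ) ≠ (j:ℕ) := fun hh => h (Fin.ext hh)
        split_ifs <;> first | rfl | (exfalso; omega)
    | inr j =>
      show (if (i:ℕ) ≤ (j:ℕ) then (0:F) else 0) = if Sum.inl i = Sum.inr j then 1 else 0
      rw [if_neg (show ¬(Sum.inl i = (Sum.inr j : Fin m ⊕ Fin n)) by simp)]
      split_ifs <;> rfl
  | inr i => cases q with
    | inl j =>
      show (if (i:ℕ) + (m - n) ≤ (j:ℕ) then (0:F) else 0)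
         = if Sum.inr i = Sum.inl j then 1 else 0
      rw [if_neg (show ¬(Sum.inr i = (Sum.inl j : Fin m ⊕ Fin n)) by simp)]
      split_ifs <;> rfl
    | inr j =>
      show (if (i:ℕ) ≤ (j:ℕ) then (if (j:ℕ) - (i:ℕ) = 0 then (1:F) else 0) else 0)
         = if Sum.inr i = Sum.inr j then 1 else 0
      by_cases h : i = j
      · subst h; simp
      · rw [if_neg (show ¬(Sum.inr i = (Sum.inr j : Fin m ⊕ Fin n)) by simpa using h)]
        have h3 : (i:ℕ) ≠ (j:ℕ) := fun hh => h (Fin.ext hh)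
        split_ifs <;> first | rfl | (exfalso; omega)

/-- Multiplication rule for Turnbull-Aitken matrices. -/
lemma TAmul (m n : ℕ) (hnm : n ≤ m) (a b c d a' b' c' d' : ℕ → F) :
    TAmat m n a b c d * TAmat m n a' b' c' d' =
    TAmat m n
      (fun k => TAconv a a' k + if m - n ≤ k then TAconv b c' (k - (m - n)) else 0)
      (fun k => TAconv a b' k + TAconv b d' k)
      (fun k => TAconv c a' k + TAconv d c' k)
      (fun k => TAconv d d' k + if m - n ≤ k then TAconv c b' (k - (m - n)) else 0) := by
  ext p q
  rw [Matrix.mul_apply, Fintype.sum_sum_type]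
  cases p with
  | inl i => cases q with
    | inl j =>
      show (∑ k : Fin m, (if (i:ℕ) ≤ (k:ℕ) then a ((k:ℕ) - i) else 0) *
              (if (k:ℕ) ≤ (j:ℕ) then a' ((j:ℕ) - k) else 0)) +
           (∑ k : Fin n, (if (i:ℕ) ≤ (k:ℕ) then b ((k:ℕ) - i) else 0) *
              (if (k:ℕ) + (m - n) ≤ (j:ℕ) then c' ((j:ℕ) - k - (m - n)) else 0)) = _
      rw [Fin.sum_univ_eq_sum_range (fun k => (if (i:ℕ) ≤ k then a (k - i) else 0) *
              (if k ≤ (j:ℕ) then a' ((j:ℕ) - k) else 0)),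
          Fin.sum_univ_eq_sum_range (fun k => (if (i:ℕ) ≤ k then b (k - i) else 0) *
              (if k + (m - n) ≤ (j:ℕ) then c' ((j:ℕ) - k - (m - n)) else 0)),
          key0 m i j j.isLt a a', keyS n (m - n) i j (by have := j.isLt; omega) b c']
      show _ = if (i:ℕ) ≤ (j:ℕ) then
          TAconv a a' ((j:ℕ) - i) +
            (if m - n ≤ (j:ℕ) - i then TAconv b c' ((j:ℕ) - i - (m-n)) else 0)
        else 0
      split_ifs <;> first | ring1 | (exfalso; omega)
    | inr j =>
      show (∑ k : Fin m, (if (i:ℕ) ≤ (k:ℕ) then a ((k:ℕ) - i) else 0) *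
              (if (k:ℕ) ≤ (j:ℕ) then b' ((j:ℕ) - k) else 0)) +
           (∑ k : Fin n, (if (i:ℕ) ≤ (k:ℕ) then b ((k:ℕ) - i) else 0) *
              (if (k:ℕ) ≤ (j:ℕ) then d' ((j:ℕ) - k) else 0)) = _
      rw [Fin.sum_univ_eq_sum_range (fun k => (if (i:ℕ) ≤ k then a (k - i) else 0) *
              (if k ≤ (j:ℕ) then b' ((j:ℕ) - k) else 0)),
          Fin.sum_univ_eq_sum_range (fun k => (if (i:ℕ) ≤ k then b (k - i) else 0) *
              (if k ≤ (j:ℕ) then d' ((j:ℕ) - k) else 0)),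
          key0 m i j (by have := j.isLt; omega) a b', key0 n i j j.isLt b d']
      show _ = if (i:ℕ) ≤ (j:ℕ) then TAconv a b' ((j:ℕ) - i) + TAconv b d' ((j:ℕ) - i) else 0
      split_ifs <;> ring
  | inr i => cases q with
    | inl j =>
      show (∑ k : Fin m, (if (i:ℕ) + (m - n) ≤ (k:ℕ) then c ((k:ℕ) - i - (m - n)) else 0) *
              (if (k:ℕ) ≤ (j:ℕ) then a' ((j:ℕ) - k) else 0)) +
           (∑ k : Fin n, (if (i:ℕ) ≤ (k:ℕ) then d ((k:ℕ) - i) else 0) *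
              (if (k:ℕ) + (m - n) ≤ (j:ℕ) then c' ((j:ℕ) - k - (m - n)) else 0)) = _
      have e1 : ∀ k : ℕ, c (k - (i:ℕ) - (m - n)) = c (k - ((i:ℕ) + (m - n))) :=
        fun k => by rw [Nat.sub_sub]
      rw [Fin.sum_univ_eq_sum_range
            (fun k => (if (i:ℕ) + (m - n) ≤ k then c (k - i - (m - n)) else 0) *
              (if k ≤ (j:ℕ) then a' ((j:ℕ) - k) else 0)),
          Fin.sum_univ_eq_sum_range (fun k => (if (i:ℕ) ≤ k then d (k - i) else 0) *
              (if k + (m - n) ≤ (j:ℕ) then c' ((j:ℕ) - k - (m - n)) else 0))]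
      simp only [e1]
      rw [key0 m ((i:ℕ) + (m - n)) j j.isLt c a',
        keyS n (m - n) i j (by have := j.isLt; omega) d c']
      show _ = if (i:ℕ) + (m - n) ≤ (j:ℕ) then
          TAconv c a' ((j:ℕ) - i - (m - n)) + TAconv d c' ((j:ℕ) - i - (m - n)) else 0
      have e2 : (j:ℕ) - ((i:ℕ) + (m - n)) = (j:ℕ) - i - (m - n) := by omega
      rw [e2]
      split_ifs <;> ring
    | inr j =>
      show (∑ k : Fin m, (if (i:ℕ) + (m - n) ≤ (k:ℕ) then c ((k:ℕ) - i - (m - n)) else 0) *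
              (if (k:ℕ) ≤ (j:ℕ) then b' ((j:ℕ) - k) else 0)) +
           (∑ k : Fin n, (if (i:ℕ) ≤ (k:ℕ) then d ((k:ℕ) - i) else 0) *
              (if (k:ℕ) ≤ (j:ℕ) then d' ((j:ℕ) - k) else 0)) = _
      have e1 : ∀ k : ℕ, c (k - (i:ℕ) - (m - n)) = c (k - ((i:ℕ) + (m - n))) :=
        fun k => by rw [Nat.sub_sub]
      rw [Fin.sum_univ_eq_sum_range
            (fun k => (if (i:ℕ) + (m - n) ≤ k then c (k - i - (m - n)) else 0) *
              (if k ≤ (j:ℕ) then b' ((j:ℕ) - k) else 0)),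
          Fin.sum_univ_eq_sum_range (fun k => (if (i:ℕ) ≤ k then d (k - i) else 0) *
              (if k ≤ (j:ℕ) then d' ((j:ℕ) - k) else 0))]
      simp only [e1]
      rw [key0 m ((i:ℕ) + (m - n)) j (by have := j.isLt; omega) c b', key0 n i j j.isLt d d']
      show _ = if (i:ℕ) ≤ (j:ℕ) then
          TAconv d d' ((j:ℕ) - i) +
            (if m - n ≤ (j:ℕ) - i then TAconv c b' ((j:ℕ) - i - (m - n)) else 0)
        else 0
      have e2 : (j:ℕ) - ((i:ℕ) + (m - n)) = (j:ℕ) - i - (m - n) := by omega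
      rw [e2]
      split_ifs <;> first | ring1 | (exfalso; omega)

lemma TAmul_tri (m n : ℕ) (hnm : n ≤ m) (y1 w1 y2 w2 : ℕ → F) :
    TAmat m n (fun k => if k = 0 then (1:F) else 0) y1 (fun _ => 0) w1 *
    TAmat m n (fun k => if k = 0 then (1:F) else 0) y2 (fun _ => 0) w2 =
    TAmat m n (fun k => if k = 0 then (1:F) else 0)
      (fun k => y2 k + TAconv y1 w2 k) (fun _ => 0) (fun k => TAconv w1 w2 k) := by
  rw [TAmul m n hnm]
  refine TAmat_congr m n _ _ _ _ _ _ _ _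
    (fun k => ?_) (fun k => ?_) (fun k => ?_) (fun k => ?_)
  · simp [TAconv_delta_left, TAconv_zero_right]
  · simp [TAconv_delta_left]
  · simp [TAconv_zero_left, TAconv_zero_right]
  · simp [TAconv_zero_left]

end TAAux

/-- the explicit transformation matrix.  For m > n ≥ 1, let
B ∈ NilC(J_m ⊕ J_n) have canonical rank r with c_{n−r} ≠ 0.  The matrix X
commuting with A whose Turnbull–Aitken parameters are x₀ = 1, xᵢ = 0 (i ≥ 1),
(y₀,…,y_{n−1}) = (a_{m−r},…,a_{m−1},0,…,0), z = 0 and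
(w₀,…,w_{n−1}) = (c_{n−r},…,c_{n−1},0,…,0) is invertible, and X⁻¹BX has
Turnbull–Aitken parameters with a'ᵢ = aᵢ for 1 ≤ i ≤ m−r−1, a'ᵢ = 0 for
m−r ≤ i ≤ m−1, c'_{n−r} = 1 and c'ᵢ = 0 for n−r < i ≤ n−1. -/
theorem transformation_matrix_c_ne_zero {F : Type*} [Field F] (m n r : ℕ)
    (hmn : m > n) (hn : n ≥ 1) (hr : 1 ≤ r) (hrn : r ≤ n)
    (a b c d : ℕ → F) (ha0 : a 0 = 0) (hd0 : d 0 = 0)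
    (hlead : c (n - r) ≠ 0)
    (hbc : ∀ i : ℕ, i < n - r → b i = 0 ∧ c i = 0)
    (hda : ∀ i : ℕ, 1 ≤ i → i ≤ n - r → d i = a i)
    (hBnil : (TAmat (F := F) m n a b c d) ^ (m + n) = 0) :
    IsUnit (TAmat (F := F) m n
        (fun k => if k = 0 then 1 else 0)
        (fun k => if k < r then a (m - r + k) else 0)
        (fun _ => 0)
        (fun k => if k < r then c (n - r + k) else 0)) ∧
    ∃ a' b' c' d' : ℕ → F,
      (TAmat (F := F) m n
        (fun k => if k = 0 then 1 else 0)
        (fun k => if k < r then a (m - r + k) else 0)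
        (fun _ => 0)
        (fun k => if k < r then c (n - r + k) else 0))⁻¹
        * TAmat m n a b c d *
        TAmat m n
        (fun k => if k = 0 then 1 else 0)
        (fun k => if k < r then a (m - r + k) else 0)
        (fun _ => 0)
        (fun k => if k < r then c (n - r + k) else 0)
        = TAmat m n a' b' c' d' ∧
      (∀ i : ℕ, 1 ≤ i → i ≤ m - r - 1 → a' i = a i) ∧
      (∀ i : ℕ, m - r ≤ i → i ≤ m - 1 → a' i = 0) ∧
      c' (n - r) = 1 ∧
      (∀ i : ℕ, n - r < i → i ≤ n - 1 → c' i = 0) := by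
  have hnm : n ≤ m := le_of_lt hmn
  set δf : ℕ → F := (fun k => if k = 0 then 1 else 0) with hδ
  set yf : ℕ → F := (fun k => if k < r then a (m - r + k) else 0) with hy
  set zf : ℕ → F := (fun _ => 0) with hz
  set wf : ℕ → F := (fun k => if k < r then c (n - r + k) else 0) with hw
  have hw0 : wf 0 ≠ 0 := by
    simp only [hw]
    rw [if_pos (show 0 < r by omega), Nat.add_zero]
    exact hlead
  set wi : ℕ → F := (fun k => PowerSeries.coeff k (PowerSeries.mk wf)⁻¹) with hwi
  have hmkwi : PowerSeries.mk wi = (PowerSeries.mk wf)⁻¹ := by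
    ext t; rw [PowerSeries.coeff_mk, hwi]
  have hcc : PowerSeries.constantCoeff (PowerSeries.mk wf) ≠ 0 := by
    rw [PowerSeries.constantCoeff_mk]; exact hw0
  have hwwi : ∀ k, TAconv wf wi k = δf k := by
    intro k
    rw [TAconv_coeff, hmkwi, PowerSeries.mul_inv_cancel _ hcc, PowerSeries.coeff_one, hδ]
  have hwiw : ∀ k, TAconv wi wf k = δf k := fun k => by rw [TAconv_comm]; exact hwwi k
  set yi : ℕ → F := (fun k => -(TAconv yf wi k)) with hyi
  -- X * Y = 1
  have hXY : TAmat m n δf yf zf wf * TAmat m n δf yi zf wi = 1 := by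
    rw [hδ, hz, TAmul_tri m n hnm yf wf yi wi]
    rw [TAmat_congr m n _ _ _ _
      (fun k => if k = 0 then (1:F) else 0) (fun _ => 0) (fun _ => 0)
      (fun k => if k = 0 then (1:F) else 0)
      (fun k => rfl)
      (fun k => by simp only [hyi]; exact neg_add_cancel _)
      (fun k => rfl)
      (fun k => by rw [hwwi k, hδ]), TAmat_one]
  -- Y * X = 1
  have hYX : TAmat m n δf yi zf wi * TAmat m n δf yf zf wf = 1 := by
    rw [hδ, hz, TAmul_tri m n hnm yi wi yf wf]
    rw [TAmat_congr m n _ _ _ _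
      (fun k => if k = 0 then (1:F) else 0) (fun _ => 0) (fun _ => 0)
      (fun k => if k = 0 then (1:F) else 0)
      (fun k => rfl)
      (fun k => by
        rw [hyi, TAconv_negconv]
        rw [show TAconv wi wf = (fun s => if s = 0 then (1:F) else 0) from
          funext fun s => by rw [hwiw s, hδ]]
        rw [TAconv_delta_right]
        exact add_neg_cancel _)
      (fun k => rfl)
      (fun k => by rw [hwiw k, hδ]), TAmat_one]
  have hinv : (TAmat m n δf yf zf wf)⁻¹ = TAmat m n δf yi zf wi :=
    Matrix.inv_eq_right_inv hXY
  -- the transformed bottom-left coefficients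
  have he : ∀ j, j < n → TAconv wi c j = (if j = n - r then (1:F) else 0) := by
    intro j hj
    rcases lt_or_ge j (n - r) with h | h
    · rw [if_neg (by omega)]
      show (∑ t ∈ Finset.range (j + 1), wi t * c (j - t)) = 0
      refine Finset.sum_eq_zero fun t ht => ?_
      rw [(hbc (j - t) (by omega)).2, mul_zero]
    · have hsub : Finset.range (j - (n - r) + 1) ⊆ Finset.range (j + 1) :=
        Finset.range_subset_range.mpr (by omega)
      have h0 : TAconv wi c j = ∑ t ∈ Finset.range (j - (n - r) + 1), wi t * c (j - t) := by
        refine (Finset.sum_subset hsub fun t ht ht' => ?_).symm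
        simp only [Finset.mem_range] at ht ht'
        rw [(hbc (j - t) (by omega)).2, mul_zero]
      have h1 : ∀ t ∈ Finset.range (j - (n - r) + 1),
          wi t * c (j - t) = wi t * wf (j - (n - r) - t) := by
        intro t ht
        simp only [Finset.mem_range] at ht
        have harg : n - r + (j - (n - r) - t) = j - t := by omega
        simp only [hw]
        rw [if_pos (show j - (n - r) - t < r by omega), harg]
      rw [h0, Finset.sum_congr rfl h1,
        show (∑ t ∈ Finset.range (j - (n - r) + 1), wi t * wf (j - (n - r) - t))
          = TAconv wi wf (j - (n - r)) from rfl,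
        hwiw (j - (n - r))]
      simp only [hδ]
      split_ifs <;> first | rfl | (exfalso; omega)
  -- the product of X⁻¹ with B
  set aP : ℕ → F :=
    (fun k => a k + if m - n ≤ k then -(TAconv yf (TAconv wi c) (k - (m - n))) else 0) with haP
  set bP : ℕ → F := (fun k => b k + TAconv yi d k) with hbP
  have hYB : TAmat m n δf yi zf wi * TAmat m n a b c d
      = TAmat m n aP bP (TAconv wi c) (TAconv wi d) := by
    rw [TAmul m n hnm]
    refine TAmat_congr m n _ _ _ _ _ _ _ _
      (fun k => ?_) (fun k => ?_) (fun k => ?_) (fun k => ?_)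
    · rw [hδ, TAconv_delta_left]
      simp only [haP]
      congr 1
      split_ifs with h
      · rw [hyi, TAconv_negconv]
      · rfl
    · rw [hδ, TAconv_delta_left, hbP]
    · rw [hz, TAconv_zero_left, zero_add]
    · rw [hz]
      simp [TAconv_zero_left]
  -- the full conjugation
  have hfull : (TAmat m n δf yf zf wf)⁻¹ * TAmat m n a b c d * TAmat m n δf yf zf wf
      = TAmat m n aP (fun k => TAconv aP yf k + TAconv bP wf k) (TAconv wi c)
          (fun k => TAconv (TAconv wi d) wf k
            + if m - n ≤ k then TAconv (TAconv wi c) yf (k - (m - n)) else 0) := by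
    rw [hinv, hYB, TAmul m n hnm]
    refine TAmat_congr m n _ _ _ _ _ _ _ _
      (fun k => ?_) (fun k => ?_) (fun k => ?_) (fun k => ?_)
    · rw [hδ, TAconv_delta_right, hz]
      simp [TAconv_zero_right]
    · rfl
    · rw [hδ, TAconv_delta_right, hz, TAconv_zero_right, add_zero]
    · rfl
  refine ⟨⟨⟨_, _, hXY, hYX⟩, rfl⟩, aP, _, TAconv wi c, _, hfull, ?_, ?_, ?_, ?_⟩
  · -- a' i = a i for 1 ≤ i ≤ m - r - 1
    intro i h1 h2
    simp only [haP]
    rcases lt_or_ge i (m - n) with h | h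
    · rw [if_neg (by omega), add_zero]
    · rw [if_pos h]
      have hz2 : TAconv yf (TAconv wi c) (i - (m - n)) = 0 := by
        show (∑ t ∈ Finset.range (i - (m - n) + 1),
          yf t * TAconv wi c (i - (m - n) - t)) = 0
        refine Finset.sum_eq_zero fun t ht => ?_
        simp only [Finset.mem_range] at ht
        rw [he (i - (m - n) - t) (by omega), if_neg (by omega), mul_zero]
      rw [hz2, neg_zero, add_zero]
  · -- a' i = 0 for m - r ≤ i ≤ m - 1
    intro i h1 h2
    simp only [haP]
    have hσ : m - n ≤ i := by omega
    rw [if_pos hσ]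
    have hs1 : n - r ≤ i - (m - n) := by omega
    have hs2 : i - (m - n) ≤ n - 1 := by omega
    have hval : TAconv yf (TAconv wi c) (i - (m - n)) = a i := by
      show (∑ t ∈ Finset.range (i - (m - n) + 1),
        yf t * TAconv wi c (i - (m - n) - t)) = a i
      rw [Finset.sum_eq_single (i - (m - n) - (n - r))]
      · rw [show i - (m - n) - (i - (m - n) - (n - r)) = n - r by omega,
          he (n - r) (by omega), if_pos rfl, mul_one]
        simp only [hy]
        rw [if_pos (by omega)]
        congr 1
        omega
      · intro t ht hne
        simp only [Finset.mem_range] at ht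
        rw [he (i - (m - n) - t) (by omega), if_neg (by omega), mul_zero]
      · intro habs
        exact absurd (Finset.mem_range.mpr (by omega)) habs
    rw [hval]
    ring1
  · -- c' (n - r) = 1
    rw [he (n - r) (by omega), if_pos rfl]
  · -- c' i = 0 for n - r < i ≤ n - 1
    intro i hi1 hi2
    rw [he i (by omega), if_neg (by omega)]
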